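/- For every real number x ≥ 1, the sum of φ(n)/n over positive integers n ≤ x is at most (6/π²)·x + log x + 1. -/

import Mathlib

open Finset Real

open ArithmeticFunction
open ArithmeticFunction.Moebius


lemma totient_div_eq (n : ℕ) (hn : 0 < n) :
    (Nat.totient n : ℝ) / n = ∑ d ∈ n.divisors, (μ d : ℝ) / d := by
  have h := (ArithmeticFunction.sum_eq_iff_sum_mul_moebius_eq
      (f := fun d => (Nat.totient d : ℝ)) (g := fun d => (d : ℝ))).mp
      (fun m _ => by exact_mod_cast congrArg (Nat.cast : ℕ → ℝ) (Nat.sum_totient m))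
  rw [eq_comm, ← Nat.sum_divisorsAntidiagonal (fun a b => (μ a : ℝ) / a),
    ← h n hn, Finset.sum_div]
  refine Finset.sum_congr rfl fun p hp => ?_
  obtain ⟨hmul, hnz⟩ := Nat.mem_divisorsAntidiagonal.mp hp
  have ha : p.1 ≠ 0 := fun h => hnz (by simp [← hmul, h])
  have hb : p.2 ≠ 0 := fun h => hnz (by simp [← hmul, h])
  rw [← hmul]
  have ha' : (p.1 : ℝ) ≠ 0 := Nat.cast_ne_zero.mpr ha
  have hb' : (p.2 : ℝ) ≠ 0 := Nat.cast_ne_zero.mpr hb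
  push_cast
  field_simp


lemma swap_sum (N : ℕ) :
    ∑ n ∈ Icc 1 N, ∑ d ∈ n.divisors, (μ d : ℝ) / d
      = ∑ d ∈ Icc 1 N, ((N / d : ℕ) : ℝ) * ((μ d : ℝ) / d) := by
  have hdiv : ∀ n ∈ Icc 1 N, n.divisors = (Icc 1 N).filter (· ∣ n) := by
    intro n hn
    rw [mem_Icc] at hn
    ext d
    simp only [Nat.mem_divisors, Finset.mem_filter, mem_Icc]
    constructor
    · rintro ⟨hd, hne⟩
      have hd1 : 1 ≤ d := Nat.one_le_iff_ne_zero.mpr (fun h => hne (by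
        subst h; exact Nat.eq_zero_of_zero_dvd hd))
      exact ⟨⟨hd1, (Nat.le_of_dvd (Nat.pos_of_ne_zero hne) hd).trans hn.2⟩, hd⟩
    · rintro ⟨_, hd⟩
      exact ⟨hd, by omega⟩
  calc ∑ n ∈ Icc 1 N, ∑ d ∈ n.divisors, (μ d : ℝ) / d
      = ∑ n ∈ Icc 1 N, ∑ d ∈ (Icc 1 N).filter (· ∣ n), (μ d : ℝ) / d :=
        Finset.sum_congr rfl fun n hn => by rw [hdiv n hn]
    _ = ∑ n ∈ Icc 1 N, ∑ d ∈ Icc 1 N, if d ∣ n then (μ d : ℝ) / d else 0 := by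
        simp [Finset.sum_filter]
    _ = ∑ d ∈ Icc 1 N, ∑ n ∈ Icc 1 N, if d ∣ n then (μ d : ℝ) / d else 0 :=
        Finset.sum_comm
    _ = ∑ d ∈ Icc 1 N, ((N / d : ℕ) : ℝ) * ((μ d : ℝ) / d) := by
        refine Finset.sum_congr rfl fun d _ => ?_
        rw [← Finset.sum_filter, Finset.sum_const,
          show Icc 1 N = Ioc 0 N from Finset.Icc_add_one_left_eq_Ioc 0 N,
          Nat.Ioc_filter_dvd_card_eq_div, nsmul_eq_mul]


lemma moe_abs_le (d : ℕ) : |(μ d : ℝ)| ≤ 1 := by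
  exact_mod_cast (by exact_mod_cast abs_moebius_le_one (n := d) : ((|μ d| : ℤ) : ℝ) ≤ 1)

lemma moe_summable : Summable (fun d : ℕ => (μ d : ℝ) / (d : ℝ) ^ 2) := by
  apply Summable.of_abs
  apply Summable.of_nonneg_of_le (fun d => abs_nonneg _) (fun d => ?_)
    (Real.summable_one_div_nat_pow.mpr one_lt_two)
  rcases eq_or_ne d 0 with rfl | hd
  · simp
  · rw [abs_div, abs_pow, Nat.abs_cast, one_div, div_eq_mul_inv]
    calc |(μ d : ℝ)| * ((d:ℝ)^2)⁻¹ ≤ 1 * ((d:ℝ)^2)⁻¹ :=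
          mul_le_mul_of_nonneg_right (moe_abs_le d) (by positivity)
      _ = ((d:ℝ)^2)⁻¹ := one_mul _

lemma tail_sq (N : ℕ) (hN : 1 ≤ N) :
    ∑' k : ℕ, (((k + (N + 1) : ℕ) : ℝ) ^ 2)⁻¹ ≤ 1 / N := by
  have hg : Summable (fun k : ℕ => (((k + (N + 1) : ℕ) : ℝ) ^ 2)⁻¹) :=
    (summable_nat_add_iff (f := fun n : ℕ => ((n : ℝ) ^ 2)⁻¹) (N + 1)).mpr
      (by simpa [one_div] using Real.summable_one_div_nat_pow.mpr one_lt_two)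
  apply Summable.tsum_le_of_sum_range_le hg
  intro m
  have hre : ∑ k ∈ Finset.range m, (((k + (N + 1) : ℕ) : ℝ) ^ 2)⁻¹
      = ∑ i ∈ Ioc N (N + m), ((i : ℝ) ^ 2)⁻¹ := by
    rw [show Ioc N (N + m) = Ico (N + 1) (N + m + 1) from (Finset.Ico_add_one_add_one_eq_Ioc _ _).symm,
      Finset.sum_Ico_eq_sum_range, show N + m + 1 - (N + 1) = m by omega]
    exact Finset.sum_congr rfl fun k _ => by rw [Nat.add_comm]
  rw [hre]
  have hle := sum_Ioc_inv_sq_le_sub (α := ℝ) (k := N) (n := N + m) (by omega) (by omega)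
  have h1 : (0:ℝ) ≤ (((N + m : ℕ)) : ℝ)⁻¹ := by positivity
  push_cast at hle h1 ⊢
  rw [one_div]
  linarith

lemma moe_tsum : ∑' d : ℕ, (μ d : ℝ) / (d : ℝ) ^ 2 = 6 / π ^ 2 := by
  have h2 : (1 : ℝ) < (2 : ℂ).re := by norm_num
  have hz : riemannZeta 2 = (π : ℂ) ^ 2 / 6 := riemannZeta_two
  have hp : ((π : ℂ)) ^ 2 ≠ 0 := by
    have : (π:ℂ) ≠ 0 := by exact_mod_cast Real.pi_ne_zero
    exact pow_ne_zero 2 this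
  have hmu : LSeries (fun n => ((μ n : ℤ) : ℂ)) 2 = 6 / (π : ℂ) ^ 2 := by
    have h1 := LSeries_zeta_mul_Lseries_moebius h2
    rw [LSeries_zeta_eq_riemannZeta h2, hz] at h1
    field_simp at h1 ⊢
    linear_combination h1
  have hterm : ∀ n : ℕ, LSeries.term (fun n => ((μ n : ℤ) : ℂ)) 2 n
      = (((μ n : ℝ) / (n : ℝ) ^ 2 : ℝ) : ℂ) := by
    intro n
    rcases eq_or_ne n 0 with rfl | hn
    · simp [LSeries.term]
    · rw [LSeries.term_of_ne_zero hn]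
      have : ((n : ℂ) ^ (2 : ℂ)) = ((n : ℂ) ^ (2 : ℕ)) := by
        rw [show ((2:ℂ)) = ((2:ℕ):ℂ) by norm_num, Complex.cpow_natCast]
      rw [this]
      push_cast
      ring
  have key : ((∑' d : ℕ, (μ d : ℝ) / (d : ℝ) ^ 2 : ℝ) : ℂ) = 6 / (π : ℂ) ^ 2 := by
    rw [Complex.ofReal_tsum, ← hmu, LSeries]
    exact tsum_congr fun n => (hterm n).symm
  have h6 : ((6 / π ^ 2 : ℝ) : ℂ) = 6 / (π : ℂ) ^ 2 := by push_cast; ring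
  rw [← h6] at key
  exact_mod_cast key

lemma moe_partial_le (N : ℕ) (hN : 1 ≤ N) :
    ∑ d ∈ Icc 1 N, (μ d : ℝ) / (d : ℝ) ^ 2 ≤ 6 / π ^ 2 + 1 / N := by
  have hsum := moe_summable
  have key := Summable.sum_add_tsum_nat_add (f := fun d : ℕ => (μ d : ℝ) / (d : ℝ) ^ 2) (N + 1) hsum
  have hPr : ∑ d ∈ Finset.range (N + 1), (μ d : ℝ) / (d : ℝ) ^ 2
      = ∑ d ∈ Icc 1 N, (μ d : ℝ) / (d : ℝ) ^ 2 := by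
    rw [eq_comm]
    apply Finset.sum_subset
    · intro d hd; rw [mem_Icc] at hd; rw [Finset.mem_range]; omega
    · intro d hd hnd
      rw [Finset.mem_range] at hd; rw [mem_Icc] at hnd
      have : d = 0 := by omega
      simp [this]
  have hsumtail : Summable (fun k : ℕ => (μ (k + (N + 1)) : ℝ) / ((k + (N + 1) : ℕ) : ℝ) ^ 2) :=
    (summable_nat_add_iff (f := fun d : ℕ => (μ d : ℝ) / (d : ℝ) ^ 2) (N + 1)).mpr hsum
  have hg : Summable (fun k : ℕ => (((k + (N + 1) : ℕ) : ℝ) ^ 2)⁻¹) :=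
    (summable_nat_add_iff (f := fun n : ℕ => ((n : ℝ) ^ 2)⁻¹) (N + 1)).mpr
      (by simpa [one_div] using Real.summable_one_div_nat_pow.mpr one_lt_two)
  have hb : ∀ k : ℕ, |(μ (k + (N + 1)) : ℝ) / ((k + (N + 1) : ℕ) : ℝ) ^ 2|
      ≤ (((k + (N + 1) : ℕ) : ℝ) ^ 2)⁻¹ := by
    intro k
    rw [abs_div, abs_pow, Nat.abs_cast, div_eq_mul_inv]
    calc |(μ (k + (N + 1)) : ℝ)| * ((((k + (N + 1) : ℕ)) : ℝ) ^ 2)⁻¹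
        ≤ 1 * ((((k + (N + 1) : ℕ)) : ℝ) ^ 2)⁻¹ :=
          mul_le_mul_of_nonneg_right (moe_abs_le _) (by positivity)
      _ = _ := one_mul _
  have hlow : -(1 / N : ℝ) ≤ ∑' k : ℕ, (μ (k + (N + 1)) : ℝ) / ((k + (N + 1) : ℕ) : ℝ) ^ 2 := by
    have hmono := Summable.tsum_le_tsum (f := fun k : ℕ => -((((k + (N + 1) : ℕ) : ℝ) ^ 2)⁻¹))
      (fun k => (abs_le.mp (hb k)).1) hg.neg hsumtail
    rw [tsum_neg] at hmono
    have := tail_sq N hN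
    linarith
  have hP : ∑ d ∈ Icc 1 N, (μ d : ℝ) / (d : ℝ) ^ 2
      = 6 / π ^ 2 - ∑' k : ℕ, (μ (k + (N + 1)) : ℝ) / ((k + (N + 1) : ℕ) : ℝ) ^ 2 := by
    rw [← hPr, ← moe_tsum, ← key]
    ring
  rw [hP]
  linarith


theorem totient_div_sum_le (x : ℝ) (hx : 1 ≤ x) :
    ∑ n ∈ Finset.Icc 1 ⌊x⌋₊, (Nat.totient n : ℝ) / n ≤
      6 / Real.pi ^ 2 * x + Real.log x + 1 := by
  set N := ⌊x⌋₊ with hNdef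
  have hx0 : (0:ℝ) ≤ x := by linarith
  have hN1 : 1 ≤ N := Nat.le_floor (by exact_mod_cast hx)
  have hNx : (N : ℝ) ≤ x := Nat.floor_le hx0
  have hN1R : (1:ℝ) ≤ (N : ℝ) := by exact_mod_cast hN1
  have hN0R : (0:ℝ) < (N : ℝ) := by linarith
  have step1 : ∑ n ∈ Icc 1 N, (Nat.totient n : ℝ) / n
      = ∑ n ∈ Icc 1 N, ∑ d ∈ n.divisors, (μ d : ℝ) / d :=
    Finset.sum_congr rfl fun n hn => totient_div_eq n (by rw [mem_Icc] at hn; omega)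
  rw [step1, swap_sum N]
  have split : ∑ d ∈ Icc 1 N, ((N / d : ℕ) : ℝ) * ((μ d : ℝ) / d)
      = x * (∑ d ∈ Icc 1 N, (μ d : ℝ) / (d : ℝ) ^ 2)
        + ∑ d ∈ Icc 1 N, ((μ d : ℝ) / d) * (((N / d : ℕ) : ℝ) - x / d) := by
    rw [Finset.mul_sum, ← Finset.sum_add_distrib]
    refine Finset.sum_congr rfl fun d hd => ?_
    have hd0 : (d : ℝ) ≠ 0 := by
      rw [mem_Icc] at hd
      exact Nat.cast_ne_zero.mpr (by omega)
    field_simp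
    ring
  rw [split]
  have hfloor : ∀ d ∈ Icc 1 N, ((N / d : ℕ) : ℝ) ≤ x / d ∧ x / d - 1 < ((N / d : ℕ) : ℝ) := by
    intro d hd
    rw [mem_Icc] at hd
    have hdpos : (0:ℝ) < d := by exact_mod_cast hd.1
    have hfd : (N / d : ℕ) = ⌊x / d⌋₊ := by rw [hNdef, ← Nat.floor_div_natCast]
    rw [hfd]
    exact ⟨Nat.floor_le (by positivity), Nat.sub_one_lt_floor _⟩
  have h1mem : (1 : ℕ) ∈ Icc 1 N := by rw [mem_Icc]; omega
  have Ebound : ∑ d ∈ Icc 1 N, ((μ d : ℝ) / d) * (((N / d : ℕ) : ℝ) - x / d)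
      ≤ ((N : ℝ) - x) + Real.log x := by
    rw [← Finset.add_sum_erase _ _ h1mem]
    have hterm1 : ((μ 1 : ℝ) / (1:ℕ)) * (((N / 1 : ℕ) : ℝ) - x / (1:ℕ)) = (N : ℝ) - x := by
      simp
    rw [hterm1]
    have herase : ∑ d ∈ (Icc 1 N).erase 1, ((μ d : ℝ) / d) * (((N / d : ℕ) : ℝ) - x / d)
        ≤ ∑ d ∈ (Icc 1 N).erase 1, (1 / d : ℝ) := by
      refine Finset.sum_le_sum fun d hd => ?_
      have hd' := Finset.mem_of_mem_erase hd
      rw [mem_Icc] at hd'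
      have hdpos : (0:ℝ) < d := by exact_mod_cast hd'.1
      obtain ⟨hup, hlo⟩ := hfloor d (Finset.mem_of_mem_erase hd)
      calc ((μ d : ℝ) / d) * (((N / d : ℕ) : ℝ) - x / d)
          ≤ |((μ d : ℝ) / d) * (((N / d : ℕ) : ℝ) - x / d)| := le_abs_self _
        _ = |(μ d : ℝ) / d| * |((N / d : ℕ) : ℝ) - x / d| := abs_mul _ _
        _ ≤ (1 / d) * 1 := by
            apply mul_le_mul
            · rw [abs_div, Nat.abs_cast]
              gcongr
              · exact moe_abs_le d
            · exact abs_le.mpr ⟨by linarith, by linarith⟩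
            · exact abs_nonneg _
            · positivity
        _ = 1 / d := mul_one _
    have hsum1d : ∑ d ∈ (Icc 1 N).erase 1, (1 / d : ℝ) = ((harmonic N : ℚ) : ℝ) - 1 := by
      have hh : ((harmonic N : ℚ) : ℝ) = ∑ d ∈ Icc 1 N, (1 / d : ℝ) := by
        rw [harmonic_eq_sum_Icc]
        push_cast
        simp [one_div]
      rw [hh, ← Finset.add_sum_erase _ _ h1mem]
      simp
    have hlog : ((harmonic N : ℚ) : ℝ) - 1 ≤ Real.log x := by
      have h1 := harmonic_le_one_add_log N
      have h2 : Real.log (N : ℝ) ≤ Real.log x := Real.log_le_log hN0R hNx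
      linarith
    linarith
  have Pb := moe_partial_le N hN1
  have hxNdiv : x / N ≤ x - N + 1 := by
    have h1 : x / N = (x - N) / N + 1 := by field_simp; ring
    have h2 : (x - N) / N ≤ x - N := div_le_self (by linarith) hN1R
    linarith
  have hmul : x * (∑ d ∈ Icc 1 N, (μ d : ℝ) / (d : ℝ) ^ 2) ≤ x * (6 / π ^ 2 + 1 / N) :=
    mul_le_mul_of_nonneg_left Pb hx0
  have hexp : x * (6 / π ^ 2 + 1 / N) = 6 / π ^ 2 * x + x / N := by ring
  linarith
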